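/- A continuous linear operator T on a separable Fréchet space is AP-hypercyclic if and only if it is \overline{AP}-hypercyclic: there exists a vector x such that for every nonempty open U and every m there is a k such that N_T(x,U) contains infinitely many arithmetic progressions of length m with common difference k. -/

import Mathlib

open Filter Topology

def ContainsAPs (A : Set ℕ) : Prop :=
  ∀ m : ℕ, ∃ a k : ℕ, 1 ≤ a ∧ 1 ≤ k ∧ ∀ j ≤ m, a + j * k ∈ A

def InOverlineAP (A : Set ℕ) : Prop :=
  ∀ m : ℕ, ∃ k : ℕ, 1 ≤ k ∧ {a : ℕ | ∀ j ≤ m, a + j * k ∈ A}.Infinite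

lemma ContainsAPs.infinite {A : Set ℕ} (h : ContainsAPs A) : A.Infinite := by
  apply Set.infinite_of_forall_exists_gt
  intro n
  obtain ⟨a, k, ha, hk, hAP⟩ := h n
  refine ⟨a + n * k, hAP n le_rfl, ?_⟩
  have : n * 1 ≤ n * k := Nat.mul_le_mul_left n hk
  omega

theorem AP_hypercyclic_iff_overlineAP_hypercyclic
    {X : Type*} [AddCommGroup X] [Module ℝ X] [UniformSpace X] [IsUniformAddGroup X]
    [ContinuousSMul ℝ X] [LocallyConvexSpace ℝ X] [CompleteSpace X]
    [TopologicalSpace.MetrizableSpace X] [TopologicalSpace.SeparableSpace X]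
    (T : X →L[ℝ] X) :
    (∃ x : X, ∀ U : Set X, IsOpen U → U.Nonempty →
        ContainsAPs {n : ℕ | (T ^ n) x ∈ U})
    ↔ (∃ x : X, ∀ U : Set X, IsOpen U → U.Nonempty →
        InOverlineAP {n : ℕ | (T ^ n) x ∈ U}) := by
  constructor
  · rintro ⟨x, hx⟩
    refine ⟨x, fun U hU hUne m => ?_⟩
    obtain ⟨a₀, k, ha₀, hk, hAP⟩ := hx U hU hUne m
    set W : Set X := ⋂ j ∈ Finset.range (m + 1), (T ^ (j * k)) ⁻¹' U with hW
    have key : ∀ a : ℕ, (T ^ a) x ∈ W ↔ ∀ j ≤ m, (T ^ (a + j * k)) x ∈ U := by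
      intro a
      rw [hW, Set.mem_iInter₂]
      constructor
      · intro h j hj
        have := h j (Finset.mem_range.mpr (Nat.lt_succ_of_le hj))
        rw [Set.mem_preimage] at this
        rwa [add_comm a (j * k), pow_add, ContinuousLinearMap.mul_apply]
      · intro h j hj
        rw [Set.mem_preimage, ← ContinuousLinearMap.mul_apply, ← pow_add,
          add_comm (j * k) a]
        exact h j (Nat.lt_succ_iff.mp (Finset.mem_range.mp hj))
    have hWopen : IsOpen W := by
      apply isOpen_biInter_finset
      intro j _
      exact hU.preimage (T ^ (j * k)).continuous
    have hWne : W.Nonempty := ⟨(T ^ a₀) x, (key a₀).mpr hAP⟩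
    refine ⟨k, hk, ?_⟩
    have hinf : {n : ℕ | (T ^ n) x ∈ W}.Infinite :=
      (hx W hWopen hWne).infinite
    apply hinf.mono
    intro a ha
    exact (key a).mp ha
  · rintro ⟨x, hx⟩
    refine ⟨x, fun U hU hUne m => ?_⟩
    obtain ⟨k, hk, hinf⟩ := hx U hU hUne m
    obtain ⟨a, ha, hagt⟩ := hinf.exists_gt 0
    exact ⟨a, k, hagt, hk, ha⟩
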